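/- Let R be a non-noetherian archimedean valuation ring that is an IF-ring, and let U be a nonzero uniserial R-module such that for each nonzero x in U the annihilator (0 : x) is not finitely generated. Then U is fp-injective if and only if U is faithful. -/

import Mathlib

open IsLocalRing

universe u

/-- A chain (valuation) ring: ideals are totally ordered by inclusion. -/
def IsChainRing (R : Type u) [CommRing R] : Prop := ∀ I J : Ideal R, I ≤ J ∨ J ≤ I

/-- Archimedean: the maximal ideal is the only nonzero prime ideal. -/
def IsArchimedeanLocal (R : Type u) [CommRing R] [IsLocalRing R] : Prop :=
  ∀ Q : Ideal R, Q.IsPrime → Q ≠ ⊥ → Q = maximalIdeal R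

/-- The annihilator ideal `(0 : x)` of a module element. -/
def annOf (R : Type u) {M : Type u} [CommRing R] [AddCommGroup M] [Module R M] (x : M) :
    Ideal R := LinearMap.ker (LinearMap.toSpanSingleton R M x)

/-- fp-injective (absolutely pure): every homomorphism from a finitely generated
submodule of a finite free module extends; equivalently `Ext¹(F, M) = 0` for every
finitely presented `F`. -/
def IsFpInjective (R M : Type u) [CommRing R] [AddCommGroup M] [Module R M] : Prop :=
  ∀ (n : ℕ) (K : Submodule R (Fin n → R)), K.FG →
    ∀ g : K →ₗ[R] M, ∃ h : (Fin n → R) →ₗ[R] M, ∀ x : K, h x = g x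

/-- A coherent ring: every finitely generated ideal is finitely presented. -/
def IsCoherentRing (R : Type u) [CommRing R] : Prop :=
  ∀ I : Ideal R, I.FG → Module.FinitePresentation R ↥I

/-- An IF-ring: coherent and self fp-injective. -/
def IsIFRing (R : Type u) [CommRing R] : Prop := IsCoherentRing R ∧ IsFpInjective R R

/-- Purity of a submodule: `I·M ⊓ X = I·X` for every finitely generated ideal `I`. -/
def IsPureSubmodule {R M : Type u} [CommRing R] [AddCommGroup M] [Module R M]
    (X : Submodule R M) : Prop :=
  ∀ I : Ideal R, I.FG → (I • (⊤ : Submodule R M)) ⊓ X = I • X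

/-- A submodule is uniserial if its submodules are totally ordered by inclusion. -/
def IsUniserialSub {R M : Type u} [CommRing R] [AddCommGroup M] [Module R M]
    (U : Submodule R M) : Prop :=
  ∀ V W : Submodule R M, V ≤ U → W ≤ U → V ≤ W ∨ W ≤ V

/-- A uniserial module: submodules are totally ordered by inclusion. -/
def IsUniserialMod (R M : Type u) [CommRing R] [AddCommGroup M] [Module R M] : Prop :=
  ∀ V W : Submodule R M, V ≤ W ∨ W ≤ V

/-- A faithful submodule: only `0` annihilates all its elements. -/
def IsFaithfulSub {R M : Type u} [CommRing R] [AddCommGroup M] [Module R M]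
    (U : Submodule R M) : Prop := ∀ r : R, (∀ x ∈ U, r • x = 0) → r = 0

/-- A faithful module: its annihilator is zero. -/
def IsFaithfulMod (R M : Type u) [CommRing R] [AddCommGroup M] [Module R M] : Prop :=
  ∀ r : R, (∀ x : M, r • x = 0) → r = 0

/-- `μ(M)`: the minimal number of generators of a module. -/
noncomputable def mu (R M : Type u) [CommRing R] [AddCommGroup M] [Module R M] : ℕ :=
  sInf {n : ℕ | ∃ s : Finset M, s.card = n ∧ Submodule.span R (s : Set M) = ⊤}

/-- A maximal ring: every family of cosets of ideals with the finite intersection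
property has nonempty total intersection. -/
def IsMaximalRing (R : Type u) [CommRing R] : Prop :=
  ∀ (ι : Type u) (a : ι → R) (A : ι → Ideal R),
    (∀ s : Finset ι, ∃ x : R, ∀ i ∈ s, x - a i ∈ A i) → ∃ x : R, ∀ i, x - a i ∈ A i

/-- Almost maximal: `R/A` is maximal for every nonzero ideal `A`. -/
def IsAlmostMaximalRing (R : Type u) [CommRing R] : Prop :=
  ∀ A : Ideal R, A ≠ ⊥ → IsMaximalRing (R ⧸ A)

/-- A uniform module: any two nonzero submodules intersect nontrivially. -/
def IsUniformMod (R M : Type u) [CommRing R] [AddCommGroup M] [Module R M] : Prop :=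
  ∀ N₁ N₂ : Submodule R M, N₁ ≠ ⊥ → N₂ ≠ ⊥ → N₁ ⊓ N₂ ≠ ⊥

/-- Bounded module type with bound `n`: every finitely generated module is a direct
sum of submodules each generated by at most `n` elements. -/
def HasBoundedModuleType (R : Type u) [CommRing R] (n : ℕ) : Prop :=
  ∀ (M : Type u) [AddCommGroup M] [Module R M], Module.Finite R M →
    ∃ (ι : Type u) (N : ι → Submodule R M),
      iSupIndep N ∧ (⨆ i, N i) = ⊤ ∧
      ∀ i, ∃ s : Finset M, s.card ≤ n ∧ Submodule.span R (s : Set M) = N i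

section Aux

variable {R : Type u} [CommRing R]

lemma mem_annOf {M : Type u} [AddCommGroup M] [Module R M] {x : M} {t : R} :
    t ∈ annOf R x ↔ t • x = 0 := by
  simp [annOf, LinearMap.mem_ker]

lemma span_finset_principal (hchain : IsChainRing R) (S : Finset R) :
    ∃ a : R, Ideal.span (S : Set R) = Ideal.span {a} := by
  classical
  induction S using Finset.induction_on with
  | empty =>
    refine ⟨0, ?_⟩
    rw [Finset.coe_empty, Ideal.span_empty]; exact (Ideal.span_singleton_eq_bot.2 rfl).symm
  | insert x S' hx ih =>
    obtain ⟨b, hb⟩ := ih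
    rcases hchain (Ideal.span {x}) (Ideal.span {b}) with h | h
    · refine ⟨b, ?_⟩
      rw [Finset.coe_insert, Ideal.span_insert, hb]
      exact sup_eq_right.2 h
    · refine ⟨x, ?_⟩
      rw [Finset.coe_insert, Ideal.span_insert, hb]
      exact sup_eq_left.2 h

lemma fg_principal (hchain : IsChainRing R) {I : Ideal R} (h : I.FG) :
    ∃ a : R, I = Ideal.span {a} := by
  obtain ⟨S, hS⟩ := h
  obtain ⟨a, ha⟩ := span_finset_principal hchain S
  exact ⟨a, by rw [← hS, ha]⟩

lemma ann_fg (hcoh : IsCoherentRing R) (s : R) : (annOf R s).FG := by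
  have hfg : (Ideal.span {s}).FG := Submodule.fg_span_singleton s
  haveI := hcoh (Ideal.span {s}) hfg
  have hmem : ∀ r : R, LinearMap.toSpanSingleton R R s r ∈ Ideal.span {s} := by
    intro r
    rw [Ideal.mem_span_singleton]
    exact ⟨r, by simp [LinearMap.toSpanSingleton_apply, mul_comm]⟩
  set f : R →ₗ[R] ↥(Ideal.span {s}) :=
    LinearMap.codRestrict (Ideal.span {s}) (LinearMap.toSpanSingleton R R s) hmem with hf
  have hsurj : Function.Surjective f := by
    rintro ⟨z, hz⟩
    obtain ⟨c, hc⟩ := Ideal.mem_span_singleton.1 hz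
    refine ⟨c, Subtype.ext ?_⟩
    simp [hf, LinearMap.toSpanSingleton_apply, hc, smul_eq_mul, mul_comm]
  have hker : LinearMap.ker f = annOf R s := by
    ext t
    simp only [hf, LinearMap.mem_ker, LinearMap.codRestrict_apply, mem_annOf]
    constructor
    · intro h; exact congrArg Subtype.val h
    · intro h; exact Subtype.ext h
  rw [← hker]
  exact Module.FinitePresentation.fg_ker f hsurj

lemma div_of_fpInj {M : Type u} [AddCommGroup M] [Module R M]
    (hfp : IsFpInjective R M) (s : R) (x : M) (hle : annOf R s ≤ annOf R x) :
    ∃ u : M, x = s • u := by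
  classical
  set v : Fin 1 → R := fun _ => s with hv
  set φ : R →ₗ[R] (Fin 1 → R) := LinearMap.toSpanSingleton R _ v with hφ
  have hker : LinearMap.ker φ ≤ LinearMap.ker (LinearMap.toSpanSingleton R M x) := by
    intro t ht
    have h1 : t • v = 0 := ht
    have h2 : t • s = 0 := by simpa [hv] using congrFun h1 0
    exact hle (mem_annOf.2 h2)
  have hKfg : (LinearMap.range φ).FG := by
    rw [← LinearMap.span_singleton_eq_range]
    exact Submodule.fg_span_singleton v
  set g : ↥(LinearMap.range φ) →ₗ[R] M :=
    (Submodule.liftQ (LinearMap.ker φ) (LinearMap.toSpanSingleton R M x) hker).comp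
      (φ.quotKerEquivRange).symm.toLinearMap with hg
  obtain ⟨h, hh⟩ := hfp 1 (LinearMap.range φ) hKfg g
  refine ⟨h (fun _ => 1), ?_⟩
  have h1 : φ 1 ∈ LinearMap.range φ := LinearMap.mem_range_self φ 1
  have h2 : h (φ 1) = g ⟨φ 1, h1⟩ := hh ⟨φ 1, h1⟩
  have e1 : (φ.quotKerEquivRange) (Submodule.Quotient.mk 1) = ⟨φ 1, h1⟩ :=
    Subtype.ext (φ.quotKerEquivRange_apply_mk 1)
  have e2 : (φ.quotKerEquivRange).symm ⟨φ 1, h1⟩ = Submodule.Quotient.mk 1 := by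
    rw [← e1, LinearEquiv.symm_apply_apply]
  have h3 : g ⟨φ 1, h1⟩ = x := by
    rw [hg]
    simp only [LinearMap.comp_apply, LinearEquiv.coe_coe, LinearEquiv.coe_toLinearMap, e2,
      Submodule.liftQ_apply, LinearMap.toSpanSingleton_apply, one_smul]
  have h4 : φ 1 = v := by simp [hφ, LinearMap.toSpanSingleton_apply]
  have h5 : v = s • (fun _ => (1:R)) := by funext i; simp [hv]
  calc x = h (φ 1) := by rw [h2, h3]
  _ = h (s • fun _ => (1:R)) := by rw [h4, h5]
  _ = s • h (fun _ => (1:R)) := map_smul h s _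

end Aux

def consZeroHom (R : Type u) [CommRing R] (n : ℕ) :
    (Fin n → R) →ₗ[R] (Fin (n+1) → R) where
  toFun w := Fin.cons 0 w
  map_add' w w' := by
    funext i
    refine Fin.cases ?_ (fun j => ?_) i <;> simp
  map_smul' c w := by
    funext i
    refine Fin.cases ?_ (fun j => ?_) i <;> simp

lemma fpInj_of_div {R : Type u} [CommRing R] (hchain : IsChainRing R)
    (hannfg : ∀ s : R, (annOf R s).FG)
    {U : Type u} [AddCommGroup U] [Module R U]
    (hdiv : ∀ (s : R) (x : U), annOf R s ≤ annOf R x → ∃ u, x = s • u) :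
    IsFpInjective R U := by
  intro n
  induction n with
  | zero =>
    intro K hK g
    refine ⟨0, fun x => ?_⟩
    have hx : x = 0 := Subsingleton.elim x 0
    rw [hx]
    simp
  | succ n IH =>
    intro K hK g
    classical
    set π : (Fin (n+1) → R) →ₗ[R] R := LinearMap.proj 0 with hπ
    set ρ : (Fin (n+1) → R) →ₗ[R] (Fin n → R) := LinearMap.funLeft R R Fin.succ with hρ
    set e := consZeroHom R n with he
    have ecomp : ∀ v : Fin (n+1) → R, π v = 0 → e (ρ v) = v := by
      intro v hv
      have hv0 : v 0 = 0 := hv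
      funext i
      refine Fin.cases ?_ (fun j => ?_) i
      · simpa [he, consZeroHom, hρ] using hv0.symm
      · simp [he, consZeroHom, hρ, LinearMap.funLeft_apply, Fin.cons_succ]
    obtain ⟨a, ha⟩ := fg_principal hchain (hK.map π)
    have haI : a ∈ Submodule.map π K := by
      rw [ha]; exact Submodule.mem_span_singleton_self a
    obtain ⟨k₀, hk₀K, hk₀⟩ := haI
    obtain ⟨S, hS⟩ := hK
    have hrex : ∀ v : Fin (n+1) → R, ∃ c : R, v ∈ K → c • a = π v := by
      intro v
      by_cases hv : v ∈ K
      · have hm : π v ∈ Submodule.map π K := Submodule.mem_map_of_mem hv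
        rw [ha] at hm
        obtain ⟨c, hc⟩ := Submodule.mem_span_singleton.1 hm
        exact ⟨c, fun _ => hc⟩
      · exact ⟨0, fun h => absurd h hv⟩
    choose rf hrf using hrex
    set K₀ : Submodule R (Fin (n+1) → R) := K ⊓ LinearMap.ker π with hK₀def
    set N : Submodule R (Fin (n+1) → R) :=
      Submodule.span R ((fun s => s - rf s • k₀) '' (S : Set (Fin (n+1) → R))) ⊔
      Submodule.map (LinearMap.toSpanSingleton R _ k₀) (annOf R a) with hN
    have hNfg : N.FG := by
      apply Submodule.FG.sup
      · exact Submodule.fg_span ((S : Set (Fin (n+1) → R)).toFinite.image _)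
      · exact Submodule.FG.map _ (hannfg a)
    have hNle : N ≤ K₀ := by
      rw [hN]
      apply sup_le
      · rw [Submodule.span_le]
        rintro _ ⟨s, hs, rfl⟩
        have hsK : s ∈ K := by rw [← hS]; exact Submodule.subset_span hs
        refine ⟨K.sub_mem hsK (K.smul_mem _ hk₀K), ?_⟩
        show π (s - rf s • k₀) = 0
        rw [map_sub, map_smul, hk₀, hrf s hsK, sub_self]
      · rintro _ ⟨t, ht, rfl⟩
        refine ⟨K.smul_mem t hk₀K, ?_⟩
        show π (t • k₀) = 0
        rw [map_smul, hk₀]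
        exact mem_annOf.1 ht
    have hKle : K ≤ N ⊔ Submodule.span R {k₀} := by
      conv_lhs => rw [← hS]
      rw [Submodule.span_le]
      intro s hs
      have hsK : s ∈ K := by rw [← hS]; exact Submodule.subset_span hs
      have h1 : s - rf s • k₀ ∈ N := by
        apply Submodule.mem_sup_left
        exact Submodule.subset_span ⟨s, hs, rfl⟩
      have h2 : rf s • k₀ ∈ Submodule.span R {k₀} :=
        Submodule.smul_mem _ _ (Submodule.mem_span_singleton_self k₀)
      simpa using Submodule.add_mem_sup h1 h2
    have hK₀N : K₀ ≤ N := by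
      rintro v ⟨hvK, hvker⟩
      have hvsup := hKle hvK
      rw [Submodule.mem_sup] at hvsup
      obtain ⟨y, hy, z, hz, rfl⟩ := hvsup
      obtain ⟨c, rfl⟩ := Submodule.mem_span_singleton.1 hz
      have hyker : π y = 0 := (hNle hy).2
      have hvk' : π (y + c • k₀) = 0 := hvker
      have hca : c • a = 0 := by
        rw [map_add, map_smul, hk₀, hyker, zero_add] at hvk'
        exact hvk'
      refine N.add_mem hy (Submodule.mem_sup_right ⟨c, mem_annOf.2 hca, ?_⟩)
      simp [LinearMap.toSpanSingleton_apply]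
    have hK₀fg : K₀.FG := (le_antisymm hK₀N hNle) ▸ hNfg
    set K₁ : Submodule R (Fin n → R) := K₀.map ρ with hK₁
    have hmem : ∀ w ∈ K₁, e w ∈ K₀ := by
      rintro _ ⟨v, hv, rfl⟩
      rw [ecomp v hv.2]
      exact hv
    set f₁ : ↥K₁ →ₗ[R] ↥K :=
      LinearMap.codRestrict K (e.comp K₁.subtype) (fun w => (hmem _ w.2).1) with hf₁
    obtain ⟨h₀, hh₀⟩ := IH K₁ (hK₀fg.map ρ) (g.comp f₁)
    have hagree : ∀ (v : Fin (n+1) → R) (hv : v ∈ K₀), h₀ (ρ v) = g ⟨v, hv.1⟩ := by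
      intro v hv
      have hw : ρ v ∈ K₁ := Submodule.mem_map_of_mem hv
      have h1 := hh₀ ⟨ρ v, hw⟩
      rw [h1]
      show g (f₁ ⟨ρ v, hw⟩) = g ⟨v, hv.1⟩
      congr 1
      apply Subtype.ext
      show e (ρ v) = v
      exact ecomp v hv.2
    set d : U := g ⟨k₀, hk₀K⟩ - h₀ (ρ k₀) with hd
    have hannle : annOf R a ≤ annOf R d := by
      intro t ht
      have hta : t • a = 0 := mem_annOf.1 ht
      have htk : t • k₀ ∈ K₀ := by
        refine ⟨K.smul_mem t hk₀K, ?_⟩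
        show π (t • k₀) = 0
        rw [map_smul, hk₀]
        exact hta
      have h1 := hagree (t • k₀) htk
      have e2 : (⟨t • k₀, htk.1⟩ : ↥K) = t • (⟨k₀, hk₀K⟩ : ↥K) := rfl
      rw [mem_annOf, hd, smul_sub]
      rw [← map_smul h₀, ← map_smul ρ, h1, e2, map_smul, sub_self]
    obtain ⟨u, hu⟩ := hdiv a d hannle
    refine ⟨h₀.comp ρ + (LinearMap.toSpanSingleton R U u).comp π, ?_⟩
    rintro ⟨v, hv⟩
    show h₀ (ρ v) + π v • u = g ⟨v, hv⟩
    have hvsup := hKle hv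
    rw [Submodule.mem_sup] at hvsup
    obtain ⟨y, hy, z, hz, hyzv⟩ := hvsup
    obtain ⟨c, rfl⟩ := Submodule.mem_span_singleton.1 hz
    have hyK₀ : y ∈ K₀ := hNle hy
    have hy0 : π y = 0 := hyK₀.2
    have hsub : (⟨v, hv⟩ : ↥K) = ⟨y, hyK₀.1⟩ + c • ⟨k₀, hk₀K⟩ := by
      apply Subtype.ext
      exact hyzv.symm
    have hgk : g ⟨k₀, hk₀K⟩ = h₀ (ρ k₀) + a • u := by
      rw [← hu, hd]; abel
    rw [hsub, map_add, map_smul, ← hagree y hyK₀, hgk, ← hyzv]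
    simp only [map_add, map_smul, hy0, hk₀, zero_add, smul_add, smul_smul, smul_eq_mul]
    abel

theorem stmt4 (R : Type u) [CommRing R] [IsLocalRing R]
    (hchain : IsChainRing R) (harch : IsArchimedeanLocal R)
    (hnoeth : ¬ IsNoetherianRing R) (hIF : IsIFRing R)
    (U : Type u) [AddCommGroup U] [Module R U] [Nontrivial U]
    (huni : IsUniserialMod R U)
    (hann : ∀ x : U, x ≠ 0 → ¬ (annOf R x).FG) :
    IsFpInjective R U ↔ IsFaithfulMod R U := by
  obtain ⟨hcoh, hselffp⟩ := hIF
  have hannfg : ∀ s : R, (annOf R s).FG := fun s => ann_fg hcoh s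
  have hdivR : ∀ (s y : R), annOf R s ≤ annOf R y → ∃ u, y = s • u :=
    fun s y h => div_of_fpInj hselffp s y h
  constructor
  · -- fp-injective → faithful
    intro hfp r hrU
    by_contra hr0
    obtain ⟨x, hx0⟩ := exists_ne (0 : U)
    have hdivU : ∀ (s : R) (z : U), annOf R s ≤ annOf R z → ∃ u, z = s • u :=
      fun s z h => div_of_fpInj hfp s z h
    have hrnu : ¬ IsUnit r := by
      intro hu
      apply hx0
      obtain ⟨w, hw⟩ := hu.exists_left_inv
      calc x = (1:R) • x := (one_smul R x).symm
      _ = (w * r) • x := by rw [hw]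
      _ = w • (r • x) := mul_smul _ _ _
      _ = 0 := by rw [hrU x, smul_zero]
    obtain ⟨b, hb⟩ := fg_principal hchain (hannfg r)
    have hbr : b * r = 0 := by
      have hm : b ∈ annOf R r := by rw [hb]; exact Submodule.mem_span_singleton_self b
      simpa [smul_eq_mul] using mem_annOf.1 hm
    have hbnu : ¬ IsUnit b := by
      intro hu
      apply hr0
      obtain ⟨w, hw⟩ := hu.exists_left_inv
      calc r = (w * b) * r := by rw [hw, one_mul]
      _ = w * (b * r) := mul_assoc _ _ _
      _ = 0 := by rw [hbr, mul_zero]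
    have hannb : annOf R b ≤ Ideal.span {r} := by
      intro t ht
      have h1 : annOf R r ≤ annOf R t := by
        rw [hb, Ideal.span_le, Set.singleton_subset_iff]
        rw [SetLike.mem_coe, mem_annOf]
        have := mem_annOf.1 ht
        simpa [smul_eq_mul, mul_comm] using this
      obtain ⟨u, hu⟩ := hdivR r t h1
      rw [Ideal.mem_span_singleton]
      exact ⟨u, by rw [hu, smul_eq_mul]⟩
    have hrx : Ideal.span {r} ≤ annOf R x := by
      rw [Ideal.span_le, Set.singleton_subset_iff, SetLike.mem_coe, mem_annOf]
      exact hrU x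
    have claim : ∀ k : ℕ, annOf R (b^(k+1)) ≤ annOf R x := by
      intro k
      induction k with
      | zero =>
        intro t ht
        rw [zero_add, pow_one] at ht
        exact hrx (hannb ht)
      | succ k ih =>
        obtain ⟨z, hz⟩ := hdivU (b^(k+1)) x ih
        intro t ht
        have h1 : t * b^(k+1+1) = 0 := by simpa [smul_eq_mul] using mem_annOf.1 ht
        have h2 : (t * b^(k+1)) * b = 0 := by rw [mul_assoc, ← pow_succ]; exact h1
        have h3 : t * b^(k+1) ∈ annOf R b := mem_annOf.2 (by simpa [smul_eq_mul] using h2)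
        obtain ⟨w, hw⟩ := Ideal.mem_span_singleton.1 (hannb h3)
        rw [mem_annOf]
        calc t • x = t • (b^(k+1) • z) := by rw [← hz]
        _ = (t * b^(k+1)) • z := (mul_smul _ _ _).symm
        _ = (r * w) • z := by rw [hw, mul_comm]
        _ = w • (r • z) := by rw [mul_comm r w, mul_smul]
        _ = 0 := by rw [hrU z, smul_zero]
    have hbP : b ∈ maximalIdeal R := by
      rw [IsLocalRing.mem_maximalIdeal]
      exact hbnu
    have hrad : b ∈ (Ideal.span {r}).radical := by
      rw [Ideal.radical_eq_sInf]
      rw [Submodule.mem_sInf]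
      rintro Q ⟨hQle, hQprime⟩
      have hQ0 : Q ≠ ⊥ := by
        intro hbot
        apply hr0
        have hrQ : r ∈ Q := hQle (Ideal.mem_span_singleton_self r)
        rw [hbot] at hrQ
        simpa using hrQ
      rw [harch Q hQprime hQ0]
      exact hbP
    obtain ⟨m, hm⟩ := Ideal.mem_radical_iff.1 hrad
    rcases Nat.eq_zero_or_pos m with rfl | hmpos
    · rw [pow_zero] at hm
      obtain ⟨w, hw⟩ := Ideal.mem_span_singleton.1 hm
      exact hrnu (isUnit_iff_exists_inv.2 ⟨w, hw.symm⟩)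
    · obtain ⟨m', rfl⟩ : ∃ m', m = m' + 1 := ⟨m - 1, (Nat.succ_pred_eq_of_pos hmpos).symm⟩
      obtain ⟨z, hz⟩ := hdivU (b^(m'+1)) x (claim m')
      obtain ⟨w, hw⟩ := Ideal.mem_span_singleton.1 hm
      apply hx0
      calc x = b^(m'+1) • z := hz
      _ = (r * w) • z := by rw [hw]
      _ = w • (r • z) := by rw [mul_comm r w, mul_smul]
      _ = 0 := by rw [hrU z, smul_zero]
  · -- faithful → fp-injective
    intro hfaith
    apply fpInj_of_div hchain hannfg
    intro s x hle
    by_cases hx0 : x = 0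
    · exact ⟨0, by rw [hx0, smul_zero]⟩
    have hne : annOf R s ≠ annOf R x := fun h => hann x hx0 (h ▸ hannfg s)
    obtain ⟨c, hcx, hcs⟩ : ∃ c, c ∈ annOf R x ∧ c ∉ annOf R s := by
      by_contra hcon
      push_neg at hcon
      exact hne (le_antisymm hle hcon)
    have hcx0 : c • x = 0 := mem_annOf.1 hcx
    have hcs0 : c * s ≠ 0 := fun h => hcs (mem_annOf.2 (by simpa [smul_eq_mul] using h))
    obtain ⟨y, hy⟩ : ∃ y : U, (c * s) • y ≠ 0 := by
      by_contra hcon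
      push_neg at hcon
      exact hcs0 (hfaith _ hcon)
    rcases huni (Submodule.span R {x}) (Submodule.span R {s • y}) with hcase | hcase
    · obtain ⟨t, ht⟩ :=
        Submodule.mem_span_singleton.1 (hcase (Submodule.mem_span_singleton_self x))
      refine ⟨t • y, ?_⟩
      rw [← ht, smul_smul, mul_comm, ← smul_smul]
    · exfalso
      obtain ⟨t, ht⟩ :=
        Submodule.mem_span_singleton.1 (hcase (Submodule.mem_span_singleton_self (s • y)))
      apply hy
      calc (c * s) • y = c • (s • y) := mul_smul _ _ _
      _ = c • (t • x) := by rw [ht]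
      _ = t • (c • x) := smul_comm _ _ _
      _ = 0 := by rw [hcx0, smul_zero]
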